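/- arXiv:1404.2963 — 3 statements merged into one kernel-verified Lean document; each statement's English description precedes it below -/
import Mathlib

section
/- Let ω be an integrable homogeneous 1-form of degree e with i_Rω = 0, and let a ≠ e be a positive integer. A homogeneous 1-form η of degree a with decomposition η = η_r − dh (h = −(1/a)i_Rη, η_r = (1/a)i_R dη) satisfies dω ∧ η = 0 if and only if a·h·dω = e·ω ∧ (η_r − dh). -/
open MvPolynomial Finset

noncomputable section

/-- An `r`-form on `ℂ^m` with polynomial coefficients, represented by its
(intendedly alternating) coefficient function `(i₁,…,i_r) ↦ τ_{i₁…i_r}`. -/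
abbrev Form (m r : ℕ) : Type := (Fin r → Fin m) → MvPolynomial (Fin m) ℂ

/-- The coefficient function is alternating. -/
def IsAlt {m r : ℕ} (τ : Form m r) : Prop :=
  ∀ (f : Fin r → Fin m) (σ : Equiv.Perm (Fin r)),
    τ (f ∘ σ) = ((Equiv.Perm.sign σ : ℤˣ) : ℤ) • τ f

/-- `τ` is a homogeneous `r`-form of total degree `p` (each `xᵢ` and each `dxᵢ`
has degree `1`, so the polynomial coefficients are homogeneous of degree `p - r`). -/
def IsHomog {m : ℕ} (r p : ℕ) (τ : Form m r) : Prop :=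
  ∀ f, (τ f).IsHomogeneous (p - r)

/-- Wedge product of forms (antisymmetrized product). -/
def wedge {m r s : ℕ} (τ : Form m r) (σ : Form m s) : Form m (r + s) :=
  fun f => (((r.factorial * s.factorial : ℕ) : ℂ))⁻¹ •
    ∑ π : Equiv.Perm (Fin (r + s)),
      ((Equiv.Perm.sign π : ℤˣ) : ℤ) •
        (τ (fun i => f (π (Fin.castAdd s i))) * σ (fun j => f (π (Fin.natAdd r j))))

/-- Exterior derivative. -/
def extd {m r : ℕ} (τ : Form m r) : Form m (r + 1) :=
  fun f => ∑ i : Fin (r + 1),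
    (-1 : ℤ) ^ (i : ℕ) • MvPolynomial.pderiv (f i) (τ (f ∘ i.succAbove))

/-- Contraction (interior product) with the radial vector field `R = Σ xᵢ ∂/∂xᵢ`. -/
def ctr {m r : ℕ} (τ : Form m (r + 1)) : Form m r :=
  fun f => ∑ j : Fin m, MvPolynomial.X j * τ (Fin.cons j f)

/-- Contraction with a polynomial vector field `X = Σ Xᵢ ∂/∂xᵢ`. -/
def ctrX {m r : ℕ} (X : Fin m → MvPolynomial (Fin m) ℂ) (τ : Form m (r + 1)) : Form m r :=
  fun f => ∑ j : Fin m, X j * τ (Fin.cons j f)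

/-- A polynomial regarded as a `0`-form. -/
def const {m : ℕ} (h : MvPolynomial (Fin m) ℂ) : Form m 0 := fun _ => h

/-- Reindexing a form along an equality of ranks. -/
def castF {m r s : ℕ} (h : r = s) (τ : Form m r) : Form m s :=
  fun f => τ (f ∘ Fin.cast h)

/-- `d (i_R τ)`, defined for forms of any rank (it is `0` on `0`-forms). -/
def dIR {m : ℕ} : {r : ℕ} → Form m r → Form m r
  | 0, _ => 0
  | _ + 1, τ => extd (ctr τ)

/-- `i_R (d τ)`, defined for forms of any rank. -/
def iRd {m r : ℕ} (τ : Form m r) : Form m r := ctr (extd τ)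

/-- The operator `ω △ τ := ω ∧ dτ + κ · dω ∧ τ`. -/
def triangle {m : ℕ} (ω : Form m 1) (κ : ℂ) {r : ℕ} (τ : Form m r) : Form m (r + 2) :=
  castF (by omega) (wedge ω (extd τ)) + κ • castF (by omega) (wedge (extd ω) τ)

end
noncomputable section
variable {m : ℕ}
def c1 (t : Form m 1) (i : Fin m) : MvPolynomial (Fin m) ℂ := t ![i]
def c2 (t : Form m 2) (i j : Fin m) : MvPolynomial (Fin m) ℂ := t ![i, j]
lemma form1_eq (t : Form m 1) (f : Fin 1 → Fin m) : t f = c1 t (f 0) := by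
  have : f = ![f 0] := by ext i; fin_cases i <;> rfl
  rw [c1, ← this]
lemma form2_eq (t : Form m 2) (f : Fin 2 → Fin m) : t f = c2 t (f 0) (f 1) := by
  have : f = ![f 0, f 1] := by ext i; fin_cases i <;> rfl
  rw [c2, ← this]
lemma S2univ : (Finset.univ : Finset (Equiv.Perm (Fin 2))) = {1, Equiv.swap 0 1} := by decide
-- wedge of two 1-forms
lemma wedge11 (t s : Form m 1) (f : Fin 2 → Fin m) :
    wedge t s f = c1 t (f 0) * c1 s (f 1) - c1 t (f 1) * c1 s (f 0) := by
  rw [wedge, S2univ, Finset.sum_insert (by decide), Finset.sum_singleton]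
  simp only [form1_eq t, form1_eq s]
  simp only [show ((1 : Equiv.Perm (Fin 2)) (Fin.castAdd 1 (0:Fin 1))) = 0 from by decide,
    show ((1 : Equiv.Perm (Fin 2)) (Fin.natAdd 1 (0:Fin 1))) = 1 from by decide,
    show ((Equiv.swap (0:Fin 2) 1) (Fin.castAdd 1 (0:Fin 1))) = 1 from by decide,
    show ((Equiv.swap (0:Fin 2) 1) (Fin.natAdd 1 (0:Fin 1))) = 0 from by decide,
    show ((Equiv.Perm.sign (1 : Equiv.Perm (Fin 2)) : ℤˣ) : ℤ) = 1 from by decide,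
    show ((Equiv.Perm.sign (Equiv.swap (0:Fin 2) 1) : ℤˣ) : ℤ) = -1 from by decide]
  norm_num
  ring

def c0 (t : Form m 0) : MvPolynomial (Fin m) ℂ := t ![]
lemma form0_eq (t : Form m 0) (f : Fin 0 → Fin m) : t f = c0 t := by
  have : f = ![] := by ext i; exact i.elim0
  rw [c0, ← this]
lemma S2univ' : (Finset.univ : Finset (Equiv.Perm (Fin (0+2)))) = {1, Equiv.swap 0 1} := by decide
lemma c2_extd (w : Form m 1) (i j : Fin m) :
    c2 (extd w) i j = pderiv i (c1 w j) - pderiv j (c1 w i) := by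
  rw [c2, extd, Fin.sum_univ_two]
  simp only [form1_eq w]
  norm_num [show ((0:Fin 2).succAbove 0) = 1 from by decide,
    show ((1:Fin 2).succAbove 0) = 0 from by decide, sub_eq_add_neg]

lemma wedge02 (c : Form m 0) (w : Form m 1) :
    wedge c (extd w) = (fun f => c0 c * c2 (extd w) (f 0) (f 1) : Form m 2) := by
  funext f
  rw [wedge, S2univ', Finset.sum_insert (by decide), Finset.sum_singleton]
  simp only [form0_eq c, form2_eq (extd w)]
  simp only [Equiv.Perm.one_apply,
    show (Fin.natAdd 0 (0:Fin (1+1))) = (0 : Fin (0+(1+1))) from by decide,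
    show (Fin.natAdd 0 (1:Fin (1+1))) = (1 : Fin (0+(1+1))) from by decide,
    show ((Equiv.swap (0:Fin (0+(1+1))) 1) 0) = 1 from by decide,
    show ((Equiv.swap (0:Fin (0+(1+1))) 1) 1) = 0 from by decide,
    show ((Equiv.Perm.sign (1 : Equiv.Perm (Fin (0+(1+1)))) : ℤˣ) : ℤ) = 1 from by decide,
    show ((Equiv.Perm.sign (Equiv.swap (0:Fin (0+(1+1))) 1) : ℤˣ) : ℤ) = -1 from by decide,
    one_smul, neg_smul]
  norm_num [Nat.factorial]
  rw [show c2 (extd w) (f 1) (f 0) = -(c2 (extd w) (f 0) (f 1)) from by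
    rw [c2_extd, c2_extd]; ring]
  rw [mul_neg, smul_neg, neg_neg]
  module

lemma S3univ : (Finset.univ : Finset (Equiv.Perm (Fin ((1+1)+1)))) =
    {1, Equiv.swap 0 1, Equiv.swap 0 2, Equiv.swap 1 2, finRotate 3, (finRotate 3)⁻¹} := by decide
lemma wedge21 (w t : Form m 1) (f : Fin 3 → Fin m) :
    wedge (extd w) t f = c2 (extd w) (f 0) (f 1) * c1 t (f 2)
      + c2 (extd w) (f 1) (f 2) * c1 t (f 0) + c2 (extd w) (f 2) (f 0) * c1 t (f 1) := by
  rw [wedge, S3univ, Finset.sum_insert (by decide), Finset.sum_insert (by decide),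
    Finset.sum_insert (by decide), Finset.sum_insert (by decide), Finset.sum_insert (by decide),
    Finset.sum_singleton]
  simp only [form2_eq (extd w), form1_eq t]
  simp only [Equiv.Perm.one_apply,
    show (Fin.castAdd 1 (0:Fin (1+1))) = (0 : Fin ((1+1)+1)) from by decide,
    show (Fin.castAdd 1 (1:Fin (1+1))) = (1 : Fin ((1+1)+1)) from by decide,
    show (Fin.natAdd (1+1) (0:Fin 1)) = (2 : Fin ((1+1)+1)) from by decide,
    show ((Equiv.swap (0:Fin ((1+1)+1)) 1) 0) = 1 from by decide,
    show ((Equiv.swap (0:Fin ((1+1)+1)) 1) 1) = 0 from by decide,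
    show ((Equiv.swap (0:Fin ((1+1)+1)) 1) 2) = 2 from by decide,
    show ((Equiv.swap (0:Fin ((1+1)+1)) 2) 0) = 2 from by decide,
    show ((Equiv.swap (0:Fin ((1+1)+1)) 2) 1) = 1 from by decide,
    show ((Equiv.swap (0:Fin ((1+1)+1)) 2) 2) = 0 from by decide,
    show ((Equiv.swap (1:Fin ((1+1)+1)) 2) 0) = 0 from by decide,
    show ((Equiv.swap (1:Fin ((1+1)+1)) 2) 1) = 2 from by decide,
    show ((Equiv.swap (1:Fin ((1+1)+1)) 2) 2) = 1 from by decide,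
    show ((finRotate 3) (0 : Fin ((1+1)+1))) = 1 from by decide,
    show ((finRotate 3) (1 : Fin ((1+1)+1))) = 2 from by decide,
    show ((finRotate 3) (2 : Fin ((1+1)+1))) = 0 from by decide,
    show ((finRotate 3)⁻¹ (0 : Fin ((1+1)+1))) = 2 from by decide,
    show ((finRotate 3)⁻¹ (1 : Fin ((1+1)+1))) = 0 from by decide,
    show ((finRotate 3)⁻¹ (2 : Fin ((1+1)+1))) = 1 from by decide,
    show ((Equiv.Perm.sign (1 : Equiv.Perm (Fin ((1+1)+1))) : ℤˣ) : ℤ) = 1 from by decide,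
    show ((Equiv.Perm.sign (Equiv.swap (0:Fin ((1+1)+1)) 1) : ℤˣ) : ℤ) = -1 from by decide,
    show ((Equiv.Perm.sign (Equiv.swap (0:Fin ((1+1)+1)) 2) : ℤˣ) : ℤ) = -1 from by decide,
    show ((Equiv.Perm.sign (Equiv.swap (1:Fin ((1+1)+1)) 2) : ℤˣ) : ℤ) = -1 from by decide,
    show ((Equiv.Perm.sign (finRotate 3 : Equiv.Perm (Fin ((1+1)+1))) : ℤˣ) : ℤ) = 1 from by decide,
    show ((Equiv.Perm.sign ((finRotate 3)⁻¹ : Equiv.Perm (Fin ((1+1)+1))) : ℤˣ) : ℤ) = 1 from by decide,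
    one_smul, neg_smul]
  norm_num [Nat.factorial]
  rw [show c2 (extd w) (f 1) (f 0) = -(c2 (extd w) (f 0) (f 1)) from by rw [c2_extd, c2_extd]; ring,
    show c2 (extd w) (f 2) (f 1) = -(c2 (extd w) (f 1) (f 2)) from by rw [c2_extd, c2_extd]; ring,
    show c2 (extd w) (f 0) (f 2) = -(c2 (extd w) (f 2) (f 0)) from by rw [c2_extd, c2_extd]; ring]
  simp only [mul_neg, neg_mul, smul_neg, neg_neg]
  module

lemma euler {n : ℕ} {p : MvPolynomial (Fin m) ℂ} (hp : p.IsHomogeneous n) :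
    ∑ i, X i * pderiv i p = (n : ℂ) • p := by
  have key : ∀ i : Fin m, X i * pderiv i p
      = ∑ d ∈ p.support, ((d i : ℕ) : ℂ) • monomial d (coeff d p) := by
    intro i
    conv_lhs => rw [p.as_sum]
    rw [map_sum, Finset.mul_sum]
    refine Finset.sum_congr rfl fun d _ => ?_
    rw [pderiv_monomial]
    rcases Nat.eq_zero_or_pos (d i) with h | h
    · simp [h]
    · have hd : (Finsupp.single i 1) + (d - Finsupp.single i 1) = d := by
        ext j
        rcases eq_or_ne j i with rfl | hj
        · simp only [Finsupp.add_apply, Finsupp.single_eq_same, Finsupp.tsub_apply]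
          omega
        · simp [Finsupp.single_apply, Ne.symm hj]
      rw [show (X i : MvPolynomial (Fin m) ℂ) = monomial (Finsupp.single i 1) 1 from rfl,
        monomial_mul, one_mul, hd, smul_monomial, smul_eq_mul, mul_comm]
  simp only [key]
  rw [Finset.sum_comm]
  conv_rhs => rw [p.as_sum, Finset.smul_sum]
  refine Finset.sum_congr rfl fun d hd => ?_
  rw [← Finset.sum_smul]
  congr 1
  have hdeg : Finsupp.degree d = n := by
    by_contra hne
    exact (MvPolynomial.mem_support_iff.mp hd) (hp.coeff_eq_zero hne)
  rw [← Nat.cast_sum]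
  rw [show ∑ i : Fin m, d i = n from ?_]
  rw [← hdeg, Finsupp.degree]
  exact (Finset.sum_subset (Finset.subset_univ _) (fun x _ hx => by
    simpa using (Finsupp.notMem_support_iff.mp hx))).symm

lemma ctr1_eq (t : Form m 1) (f : Fin 0 → Fin m) : ctr t f = ∑ j, X j * c1 t j := by
  rw [ctr]
  refine Finset.sum_congr rfl fun j _ => ?_
  rw [form1_eq t]
  simp [Fin.cons_zero]

lemma ctr2_eq (D : Form m 2) (f : Fin 1 → Fin m) : ctr D f = ∑ j, X j * c2 D j (f 0) := by
  rw [ctr]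
  refine Finset.sum_congr rfl fun j _ => ?_
  rw [form2_eq D]
  rw [show ((1 : Fin 2)) = Fin.succ 0 from rfl]
  simp [Fin.cons_zero, Fin.cons_succ]

lemma extd0_eq (c : Form m 0) (f : Fin 1 → Fin m) : extd c f = pderiv (f 0) (c0 c) := by
  rw [extd, show (Finset.univ : Finset (Fin (0+1))) = {0} from by decide, Finset.sum_singleton]
  rw [form0_eq c]
  norm_num

lemma S3univ' : (Finset.univ : Finset (Equiv.Perm (Fin (1+(1+1))))) =
    {1, Equiv.swap 0 1, Equiv.swap 0 2, Equiv.swap 1 2, finRotate 3, (finRotate 3)⁻¹} := by decide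
lemma wedge12 (t w : Form m 1) (f : Fin 3 → Fin m) :
    wedge t (extd w) f = c1 t (f 0) * c2 (extd w) (f 1) (f 2)
      + c1 t (f 1) * c2 (extd w) (f 2) (f 0) + c1 t (f 2) * c2 (extd w) (f 0) (f 1) := by
  rw [wedge, S3univ', Finset.sum_insert (by decide), Finset.sum_insert (by decide),
    Finset.sum_insert (by decide), Finset.sum_insert (by decide), Finset.sum_insert (by decide),
    Finset.sum_singleton]
  simp only [form2_eq (extd w), form1_eq t]
  simp only [Equiv.Perm.one_apply,
    show (Fin.castAdd (1+1) (0:Fin 1)) = (0 : Fin (1+(1+1))) from by decide,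
    show (Fin.natAdd 1 (0:Fin (1+1))) = (1 : Fin (1+(1+1))) from by decide,
    show (Fin.natAdd 1 (1:Fin (1+1))) = (2 : Fin (1+(1+1))) from by decide,
    show ((Equiv.swap (0:Fin (1+(1+1))) 1) 0) = 1 from by decide,
    show ((Equiv.swap (0:Fin (1+(1+1))) 1) 1) = 0 from by decide,
    show ((Equiv.swap (0:Fin (1+(1+1))) 1) 2) = 2 from by decide,
    show ((Equiv.swap (0:Fin (1+(1+1))) 2) 0) = 2 from by decide,
    show ((Equiv.swap (0:Fin (1+(1+1))) 2) 1) = 1 from by decide,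
    show ((Equiv.swap (0:Fin (1+(1+1))) 2) 2) = 0 from by decide,
    show ((Equiv.swap (1:Fin (1+(1+1))) 2) 0) = 0 from by decide,
    show ((Equiv.swap (1:Fin (1+(1+1))) 2) 1) = 2 from by decide,
    show ((Equiv.swap (1:Fin (1+(1+1))) 2) 2) = 1 from by decide,
    show ((finRotate 3) (0 : Fin (1+(1+1)))) = 1 from by decide,
    show ((finRotate 3) (1 : Fin (1+(1+1)))) = 2 from by decide,
    show ((finRotate 3) (2 : Fin (1+(1+1)))) = 0 from by decide,
    show ((finRotate 3)⁻¹ (0 : Fin (1+(1+1)))) = 2 from by decide,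
    show ((finRotate 3)⁻¹ (1 : Fin (1+(1+1)))) = 0 from by decide,
    show ((finRotate 3)⁻¹ (2 : Fin (1+(1+1)))) = 1 from by decide,
    show ((Equiv.Perm.sign (1 : Equiv.Perm (Fin (1+(1+1)))) : ℤˣ) : ℤ) = 1 from by decide,
    show ((Equiv.Perm.sign (Equiv.swap (0:Fin (1+(1+1))) 1) : ℤˣ) : ℤ) = -1 from by decide,
    show ((Equiv.Perm.sign (Equiv.swap (0:Fin (1+(1+1))) 2) : ℤˣ) : ℤ) = -1 from by decide,
    show ((Equiv.Perm.sign (Equiv.swap (1:Fin (1+(1+1))) 2) : ℤˣ) : ℤ) = -1 from by decide,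
    show ((Equiv.Perm.sign (finRotate 3 : Equiv.Perm (Fin (1+(1+1)))) : ℤˣ) : ℤ) = 1 from by decide,
    show ((Equiv.Perm.sign ((finRotate 3)⁻¹ : Equiv.Perm (Fin (1+(1+1)))) : ℤˣ) : ℤ) = 1 from by decide,
    one_smul, neg_smul]
  norm_num [Nat.factorial]
  rw [show c2 (extd w) (f 1) (f 0) = -(c2 (extd w) (f 0) (f 1)) from by rw [c2_extd, c2_extd]; ring,
    show c2 (extd w) (f 2) (f 1) = -(c2 (extd w) (f 1) (f 2)) from by rw [c2_extd, c2_extd]; ring,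
    show c2 (extd w) (f 0) (f 2) = -(c2 (extd w) (f 2) (f 0)) from by rw [c2_extd, c2_extd]; ring]
  simp only [mul_neg, neg_mul, smul_neg, neg_neg]
  module

lemma main_aux {a e : ℕ} (he : 1 ≤ e) (ha : 0 < a)
    (w t : Fin m → MvPolynomial (Fin m) ℂ)
    (D : Fin m → Fin m → MvPolynomial (Fin m) ℂ)
    (hD : ∀ i j, D i j = pderiv i (w j) - pderiv j (w i))
    (hw : ∀ i, (w i).IsHomogeneous (e-1))
    (hR : ∑ i, X i * w i = 0)
    (hint : ∀ i j k, w i * D j k + w j * D k i + w k * D i j = 0)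
    (hwne : ∃ i, w i ≠ 0)
    (H : MvPolynomial (Fin m) ℂ) (hH : H = ∑ j, X j * t j) :
    (∀ i j k, D i j * t k + D j k * t i + D k i * t j = 0) ↔
      (∀ i j, -(H * D i j) = (e:ℂ) • (w i * t j - w j * t i)) := by
  have hED : ∀ j, ∑ i, X i * D i j = (e:ℂ) • w j := by
    intro j
    have h1 : ∑ i, X i * pderiv i (w j) = ((e-1 : ℕ):ℂ) • w j := euler (hw j)
    have h2 : ∑ i, X i * pderiv j (w i) = - w j := by
      have h3 : pderiv j (∑ i, X i * w i)
          = ∑ i, ((if i = j then (1:MvPolynomial (Fin m) ℂ) else 0) * w i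
              + X i * pderiv j (w i)) := by
        rw [map_sum]
        refine Finset.sum_congr rfl fun i _ => ?_
        rw [pderiv_mul]
        congr 2
        rw [pderiv_X, Pi.single_apply]
      rw [hR, map_zero] at h3
      rw [Finset.sum_add_distrib] at h3
      have h4 : ∑ i, (if i = j then (1:MvPolynomial (Fin m) ℂ) else 0) * w i = w j := by
        simp [ite_mul, Finset.sum_ite_eq']
      rw [h4] at h3
      linear_combination -h3
    calc ∑ i, X i * D i j = ∑ i, (X i * pderiv i (w j) - X i * pderiv j (w i)) := by
          refine Finset.sum_congr rfl fun i _ => by rw [hD]; ring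
      _ = ((e-1:ℕ):ℂ) • w j - (- w j) := by rw [Finset.sum_sub_distrib, h1, h2]
      _ = (e:ℂ) • w j := by rw [Nat.cast_sub he]; module
  constructor
  · intro hc j k
    have h0 : ∑ i, X i * (D i j * t k + D j k * t i + D k i * t j) = 0 := by
      simp only [hc, mul_zero, Finset.sum_const_zero]
    have h1 : ∑ i, X i * (D i j * t k) = ((e:ℂ) • w j) * t k := by
      rw [← hED j, Finset.sum_mul]
      exact Finset.sum_congr rfl fun i _ => by ring
    have h2 : ∑ i, X i * (D j k * t i) = D j k * H := by
      rw [hH, Finset.mul_sum]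
      exact Finset.sum_congr rfl fun i _ => by ring
    have h3 : ∑ i, X i * (D k i * t j) = -(((e:ℂ) • w k) * t j) := by
      rw [← hED k, Finset.sum_mul, ← Finset.sum_neg_distrib]
      refine Finset.sum_congr rfl fun i _ => ?_
      rw [hD k i, hD i k]
      ring
    rw [show ∀ A B C : Fin m → MvPolynomial (Fin m) ℂ, (∑ i, X i * (A i + B i + C i))
        = (∑ i, X i * A i) + (∑ i, X i * B i) + (∑ i, X i * C i) from ?_] at h0
    · rw [h1, h2, h3] at h0
      simp only [smul_eq_C_mul] at h0 ⊢
      linear_combination -h0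
    · intro A B C
      rw [← Finset.sum_add_distrib, ← Finset.sum_add_distrib]
      exact Finset.sum_congr rfl fun i _ => by ring
  · intro hu
    rcases eq_or_ne H 0 with hH0 | hH0
    · have he0 : (e:ℂ) ≠ 0 := Nat.cast_ne_zero.mpr (by omega)
      have hcomm : ∀ i j, w i * t j = w j * t i := by
        intro i j
        have h5 := hu i j
        rw [hH0, zero_mul, neg_zero] at h5
        rcases smul_eq_zero.mp h5.symm with h | h
        · exact absurd h he0
        · linear_combination h
      obtain ⟨i0, hi0⟩ := hwne
      intro i j k
      have hkey : w i0 * (D i j * t k + D j k * t i + D k i * t j) = 0 := by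
        linear_combination (D i j) * hcomm i0 k + (D j k) * hcomm i0 i
          + (D k i) * hcomm i0 j + t i0 * hint i j k
      exact (mul_eq_zero.mp hkey).resolve_left hi0
    · intro i j k
      have hkey : H * (D i j * t k + D j k * t i + D k i * t j) = 0 := by
        have h1 := hu i j
        have h2 := hu j k
        have h3 := hu k i
        simp only [smul_eq_C_mul] at h1 h2 h3
        linear_combination (-(t k)) * h1 + (-(t i)) * h2 + (-(t j)) * h3
      exact (mul_eq_zero.mp hkey).resolve_left hH0

end

/-- for a homogeneous 1-form `η` of degree `a` with decomposition
`η = η_r − dh` (`h = −(1/a)i_R η`, `η_r = (1/a)i_R dη`), one has `dω∧η = 0`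
iff the unfolding equation `a·h·dω = e·ω∧(η_r − dh)` holds. -/
theorem cycle_iff_unfolding {m a e : ℕ} (he : 1 ≤ e) (ha : 0 < a) (hane : a ≠ e)
    (ω : Form m 1) (hω : IsHomog 1 e ω) (hR : ctr ω = 0)
    (hint : wedge ω (extd ω) = 0) (hωne : ω ≠ 0)
    (η : Form m 1) (hη : IsHomog 1 a η) :
    wedge (extd ω) η = 0 ↔
      (a : ℂ) • wedge (-((a : ℂ))⁻¹ • ctr η) (extd ω) =
        (e : ℂ) • wedge ω
          (((a : ℂ))⁻¹ • ctr (extd η) - extd (-((a : ℂ))⁻¹ • ctr η)) := by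
  have haC : ((a:ℂ)) ≠ 0 := Nat.cast_ne_zero.mpr ha.ne'
  have ha1 : 1 ≤ a := ha
  -- ξ = η
  have hxi : (((a : ℂ))⁻¹ • ctr (extd η) - extd (-((a : ℂ))⁻¹ • ctr η)) = η := by
    funext f
    have h1 : ctr (extd η) f
        = (∑ j, X j * pderiv j (c1 η (f 0))) - ∑ j, X j * pderiv (f 0) (c1 η j) := by
      rw [ctr2_eq, ← Finset.sum_sub_distrib]
      exact Finset.sum_congr rfl fun j _ => by rw [c2_extd]; ring
    have h2 : extd (-((a:ℂ))⁻¹ • ctr η) f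
        = -((a:ℂ))⁻¹ • pderiv (f 0) (∑ j, X j * c1 η j) := by
      rw [extd0_eq]
      rw [show c0 (-((a:ℂ))⁻¹ • ctr η) = -((a:ℂ))⁻¹ • (ctr η ![]) from rfl]
      rw [ctr1_eq, smul_eq_C_mul, pderiv_C_mul, ← smul_eq_C_mul]
    have hE : ∑ j, X j * pderiv j (c1 η (f 0)) = ((a-1:ℕ):ℂ) • c1 η (f 0) :=
      euler (hη ![f 0])
    have hP : pderiv (f 0) (∑ j, X j * c1 η j)
        = c1 η (f 0) + ∑ j, X j * pderiv (f 0) (c1 η j) := by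
      rw [map_sum]
      calc ∑ j, pderiv (f 0) (X j * c1 η j)
          = ∑ j, ((if j = f 0 then (1:MvPolynomial (Fin m) ℂ) else 0) * c1 η j
            + X j * pderiv (f 0) (c1 η j)) := by
            refine Finset.sum_congr rfl fun j _ => ?_
            rw [pderiv_mul]
            congr 2
            rw [pderiv_X, Pi.single_apply]
        _ = c1 η (f 0) + ∑ j, X j * pderiv (f 0) (c1 η j) := by
            rw [Finset.sum_add_distrib]
            congr 1
            simp [ite_mul, Finset.sum_ite_eq']
    rw [Pi.sub_apply, Pi.smul_apply, h1, h2, hP, hE, form1_eq η f, Nat.cast_sub ha1]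
    match_scalars <;> field_simp <;> ring
  rw [hxi]
  -- LHS form
  have hL : (a:ℂ) • wedge (-((a:ℂ))⁻¹ • ctr η) (extd ω)
      = (fun f => -((∑ l, X l * c1 η l) *
          (pderiv (f 0) (c1 ω (f 1)) - pderiv (f 1) (c1 ω (f 0)))) : Form m 2) := by
    rw [wedge02]
    funext f
    rw [Pi.smul_apply]
    rw [show c0 (-((a:ℂ))⁻¹ • ctr η) = -((a:ℂ))⁻¹ • (ctr η ![]) from rfl, ctr1_eq, c2_extd]
    rw [smul_mul_assoc, smul_smul, mul_neg, mul_inv_cancel₀ haC, neg_one_smul]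
  have hcyc : (wedge (extd ω) η = 0) ↔ (∀ i j k : Fin m,
      (pderiv i (c1 ω j) - pderiv j (c1 ω i)) * c1 η k
      + (pderiv j (c1 ω k) - pderiv k (c1 ω j)) * c1 η i
      + (pderiv k (c1 ω i) - pderiv i (c1 ω k)) * c1 η j = 0) := by
    constructor
    · intro h i j k
      have h5 := congrFun h ![i,j,k]
      rw [wedge21] at h5
      simp only [c2_extd] at h5
      simpa using h5
    · intro h
      funext f
      rw [wedge21]
      simp only [c2_extd]
      simpa using h (f 0) (f 1) (f 2)
  have hunf : ((a:ℂ) • wedge (-((a:ℂ))⁻¹ • ctr η) (extd ω) = (e:ℂ) • wedge ω η) ↔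
      (∀ i j : Fin m, -((∑ l, X l * c1 η l) * (pderiv i (c1 ω j) - pderiv j (c1 ω i)))
        = (e:ℂ) • (c1 ω i * c1 η j - c1 ω j * c1 η i)) := by
    rw [hL]
    constructor
    · intro h i j
      have h5 := congrFun h ![i,j]
      rw [Pi.smul_apply, wedge11] at h5
      simpa using h5
    · intro h
      funext f
      rw [Pi.smul_apply, wedge11]
      exact h (f 0) (f 1)
  rw [hcyc, hunf]
  -- component facts
  have hRc : ∑ i, X i * c1 ω i = 0 := by
    have h5 : ctr ω Fin.elim0 = 0 := by rw [hR]; rfl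
    rwa [ctr1_eq] at h5
  have hintc : ∀ i j k : Fin m,
      c1 ω i * (pderiv j (c1 ω k) - pderiv k (c1 ω j))
      + c1 ω j * (pderiv k (c1 ω i) - pderiv i (c1 ω k))
      + c1 ω k * (pderiv i (c1 ω j) - pderiv j (c1 ω i)) = 0 := by
    intro i j k
    have h5 : wedge ω (extd ω) ![i,j,k] = 0 := by rw [hint]; rfl
    rw [wedge12] at h5
    simp only [c2_extd] at h5
    simpa using h5
  have hwnec : ∃ i, c1 ω i ≠ 0 := by
    by_contra h
    push_neg at h
    exact hωne (funext fun f => by rw [form1_eq ω f, h (f 0)]; rfl)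
  exact main_aux he ha (c1 ω) (c1 η)
    (fun i j => pderiv i (c1 ω j) - pderiv j (c1 ω i)) (fun i j => rfl)
    (fun i => hω ![i]) hRc hintc hwnec _ rfl
end

section
/- Let ω_L = Σᵢ λᵢ Fᵢ dfᵢ where f₁,…,f_s are homogeneous polynomials of degrees d₁,…,d_s, Fᵢ = Π_{j≠i} f_j, and λᵢ ∈ ℂ satisfy Σλᵢdᵢ = 0. Then each Fᵢ belongs to the ideal I(ω_L) = {h : h·dω_L = ω_L ∧ θ for some 1-form θ}; explicitly, with e = Σdᵢ and bᵢ = e − dᵢ, the 1-form θᵢ = (bᵢ/(eλᵢ))·Σ_{j≠i}(λⱼ−λᵢ)F_{ji}dfⱼ + dFᵢ satisfies bᵢ·Fᵢ·dω_L = e·ω_L ∧ (θᵢ − dFᵢ), where F_{ji} = Π_{k≠j,i} f_k. -/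
open MvPolynomial Finset

noncomputable section
/-- The rational 1-form `ω_R = r·F·dG − s·G·dF`. -/
def omegaR {m : ℕ} (r s : ℕ) (F G : MvPolynomial (Fin m) ℂ) : Form m 1 :=
  (r : ℂ) • wedge (const F) (extd (const G)) - (s : ℂ) • wedge (const G) (extd (const F))

/-- `Fᵢ = Π_{j ≠ i} fⱼ`. -/
def Fi {m s : ℕ} (f : Fin s → MvPolynomial (Fin m) ℂ) (i : Fin s) :
    MvPolynomial (Fin m) ℂ := ∏ j ∈ Finset.univ.erase i, f j

/-- `F_{ji} = Π_{k ≠ j, i} f_k`. -/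
def Fji {m s : ℕ} (f : Fin s → MvPolynomial (Fin m) ℂ) (j i : Fin s) :
    MvPolynomial (Fin m) ℂ := ∏ k ∈ (Finset.univ.erase j).erase i, f k

/-- The logarithmic 1-form `ω_L = Σᵢ λᵢ Fᵢ dfᵢ`. -/
def omegaL {m s : ℕ} (lam : Fin s → ℂ) (f : Fin s → MvPolynomial (Fin m) ℂ) :
    Form m 1 :=
  ∑ i, lam i • wedge (const (Fi f i)) (extd (const (f i)))
end

noncomputable section AuxProof
section Helpers
variable {m : ℕ}

lemma sumPerm1 {M : Type*} [AddCommMonoid M] (F : Equiv.Perm (Fin 1) → M) :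
    ∑ π, F π = F 1 := by
  rw [show (Finset.univ : Finset (Equiv.Perm (Fin 1))) = {1} by decide, Finset.sum_singleton]

lemma sumPerm2 {M : Type*} [AddCommMonoid M] (F : Equiv.Perm (Fin 2) → M) :
    ∑ π, F π = F 1 + F (Equiv.swap 0 1) := by
  rw [show (Finset.univ : Finset (Equiv.Perm (Fin 2))) = {1, Equiv.swap 0 1} by decide,
    Finset.sum_insert (by decide), Finset.sum_singleton]

lemma extd_const (h : MvPolynomial (Fin m) ℂ) (g : Fin 1 → Fin m) :
    extd (const h) g = pderiv (g 0) h := by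
  simp [extd, const, Fin.sum_univ_one]

lemma wedge01 (h : MvPolynomial (Fin m) ℂ) (τ : Form m 1) (g : Fin 1 → Fin m) :
    wedge (const h) τ g = h * τ g := by
  unfold wedge
  rw [sumPerm1]
  have e1 : (fun j : Fin 1 => g ((1 : Equiv.Perm (Fin 1)) (Fin.natAdd 0 j))) = g := by
    funext j
    exact congrArg g ((by decide : ∀ j : Fin 1, (1 : Equiv.Perm (Fin 1)) (Fin.natAdd 0 j) = j) j)
  simp [const, e1]

lemma wedge11_s13 (τ σ : Form m 1) (g : Fin 2 → Fin m) :
    wedge τ σ g = τ (fun _ => g 0) * σ (fun _ => g 1) - τ (fun _ => g 1) * σ (fun _ => g 0) := by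
  unfold wedge
  rw [sumPerm2]
  have c1 : ∀ (π : Equiv.Perm (Fin 2)), (fun i : Fin 1 => g (π (Fin.castAdd 1 i)))
      = (fun _ : Fin 1 => g (π 0)) := by
    intro π; funext i
    exact congrArg (g ∘ π) ((by decide : ∀ i : Fin 1, (Fin.castAdd 1 i : Fin 2) = 0) i)
  have c2 : ∀ (π : Equiv.Perm (Fin 2)), (fun j : Fin 1 => g (π (Fin.natAdd 1 j)))
      = (fun _ : Fin 1 => g (π 1)) := by
    intro π; funext j
    exact congrArg (g ∘ π) ((by decide : ∀ j : Fin 1, (Fin.natAdd 1 j : Fin 2) = 1) j)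
  rw [c1, c2, c1, c2]
  have s1 : ((1 : Equiv.Perm (Fin 2)) 0) = 0 := rfl
  have s2 : ((1 : Equiv.Perm (Fin 2)) 1) = 1 := rfl
  have s3 : (Equiv.swap (0 : Fin 2) 1) 0 = 1 := by decide
  have s4 : (Equiv.swap (0 : Fin 2) 1) 1 = 0 := by decide
  rw [s1, s2, s3, s4]
  simp [Equiv.Perm.sign_swap (by decide : (0 : Fin 2) ≠ 1)]
  ring

lemma extd1 (τ : Form m 1) (g : Fin 2 → Fin m) :
    extd τ g = pderiv (g 0) (τ (fun _ => g 1)) - pderiv (g 1) (τ (fun _ => g 0)) := by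
  unfold extd
  rw [Fin.sum_univ_two]
  have c1 : g ∘ (0 : Fin 2).succAbove = (fun _ : Fin 1 => g 1) := by
    funext j
    exact congrArg g ((by decide : ∀ j : Fin 1, (0 : Fin 2).succAbove j = 1) j)
  have c2 : g ∘ (1 : Fin 2).succAbove = (fun _ : Fin 1 => g 0) := by
    funext j
    exact congrArg g ((by decide : ∀ j : Fin 1, (1 : Fin 2).succAbove j = 0) j)
  rw [c1, c2]
  simp [sub_eq_add_neg]

lemma wedge0extd (h : MvPolynomial (Fin m) ℂ) (σ : Form m 1) (g : Fin 2 → Fin m) :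
    wedge (const h) (extd σ) g = h * extd σ g := by
  unfold wedge
  rw [sumPerm2]
  have c2 : ∀ (π : Equiv.Perm (Fin 2)), (fun j : Fin 2 => g (π (Fin.natAdd 0 j)))
      = (fun j => g (π j)) := by
    intro π; funext j
    exact congrArg (g ∘ π) ((by decide : ∀ j : Fin 2, (Fin.natAdd 0 j : Fin 2) = j) j)
  rw [c2, c2]
  have e1 : (fun j : Fin 2 => g ((1 : Equiv.Perm (Fin 2)) j)) = g := rfl
  have swapped : extd σ (fun j => g (Equiv.swap 0 1 j)) = - extd σ g := by
    rw [extd1, extd1]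
    have w0 : (Equiv.swap (0:Fin 2) 1) 0 = 1 := by decide
    have w1 : (Equiv.swap (0:Fin 2) 1) 1 = 0 := by decide
    rw [w0, w1]
    ring
  rw [e1, swapped]
  simp only [const, Equiv.Perm.sign_one, Equiv.Perm.sign_swap (by decide : (0 : Fin 2) ≠ 1)]
  push_cast
  rw [one_smul, neg_one_smul]
  rw [Nat.factorial]
  push_cast
  rw [mul_neg, neg_neg, ← two_smul ℂ (h * extd σ g), smul_smul]
  norm_num

end Helpers

section Key
variable {m s : ℕ}

lemma pderiv_comm' {σ R : Type*} [CommSemiring R] [DecidableEq σ] (i j : σ)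
    (p : MvPolynomial σ R) : pderiv i (pderiv j p) = pderiv j (pderiv i p) := by
  induction p using MvPolynomial.induction_on' with
  | add p q hp hq => simp [hp, hq]
  | monomial s a =>
    rcases eq_or_ne i j with rfl | hij
    · rfl
    · simp only [pderiv_monomial]
      rw [Finsupp.tsub_apply, Finsupp.tsub_apply, Finsupp.single_eq_of_ne hij,
        Finsupp.single_eq_of_ne (Ne.symm hij), tsub_right_comm]
      congr 1
      simp only [Nat.sub_zero]
      ring

lemma pderiv_finset_prod {σ R ι : Type*} [CommSemiring R] [DecidableEq ι] (x : σ)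
    (t : Finset ι) (g : ι → MvPolynomial σ R) :
    pderiv x (∏ k ∈ t, g k) = ∑ k ∈ t, (∏ l ∈ t.erase k, g l) * pderiv x (g k) := by
  classical
  induction t using Finset.induction_on with
  | empty => simp
  | insert a t ha ih =>
    have hcong : ∀ k ∈ t, (∏ l ∈ (insert a t).erase k, g l) * pderiv x (g k)
        = g a * ((∏ l ∈ t.erase k, g l) * pderiv x (g k)) := by
      intro k hk
      rw [Finset.erase_insert_of_ne (by rintro rfl; exact ha hk),
        Finset.prod_insert (fun h => ha (Finset.erase_subset _ _ h))]
      ring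
    rw [Finset.sum_insert ha, Finset.erase_insert ha, Finset.sum_congr rfl hcong,
      ← Finset.mul_sum, ← ih, Finset.prod_insert ha, pderiv_mul]
    ring

lemma pderiv_Fi (x : Fin m) (f : Fin s → MvPolynomial (Fin m) ℂ) (j : Fin s) :
    pderiv x (Fi f j) = ∑ k ∈ Finset.univ.erase j, Fji f j k * pderiv x (f k) :=
  pderiv_finset_prod x _ f

lemma Fji_symm (f : Fin s → MvPolynomial (Fin m) ℂ) (k j : Fin s) :
    Fji f k j = Fji f j k := by
  unfold Fji; rw [Finset.erase_right_comm]

lemma Fi_eq (f : Fin s → MvPolynomial (Fin m) ℂ) {j i : Fin s} (h : j ≠ i) :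
    Fi f i = f j * Fji f j i := by
  unfold Fi Fji
  rw [Finset.erase_right_comm]
  exact (Finset.mul_prod_erase _ f (Finset.mem_erase.mpr ⟨h, Finset.mem_univ j⟩)).symm

lemma Fji_pull (f : Fin s → MvPolynomial (Fin m) ℂ) {a b c : Fin s} (hab : a ≠ b) (hac : a ≠ c) :
    Fji f b c = f a * ∏ l ∈ ((Finset.univ.erase b).erase c).erase a, f l :=
  (Finset.mul_prod_erase _ f (by simp [Finset.mem_erase, hab, hac])).symm

lemma triple_prod (f : Fin s → MvPolynomial (Fin m) ℂ) {i j k : Fin s}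
    (hij : i ≠ j) (hik : i ≠ k) (hjk : j ≠ k) :
    Fi f k * Fji f j i = Fi f i * Fji f k j := by
  have h1 : Fi f k = f j * Fji f j k := Fi_eq f hjk
  have h1' : Fji f j k = f i * ∏ l ∈ ((Finset.univ.erase j).erase k).erase i, f l :=
    Fji_pull f hij hik
  have h2 : Fji f j i = f k * ∏ l ∈ ((Finset.univ.erase j).erase i).erase k, f l :=
    Fji_pull f hjk.symm hik.symm
  have h3 : Fi f i = f j * Fji f j i := Fi_eq f hij.symm
  have h4 : Fji f k j = f i * ∏ l ∈ ((Finset.univ.erase k).erase j).erase i, f l :=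
    Fji_pull f hik hij
  have h5 : ((Finset.univ.erase k).erase j) = ((Finset.univ.erase j).erase k) :=
    Finset.erase_right_comm
  rw [h1, h1', h3, h4, h5, h2]
  ring

lemma sq_antisym {ι : Type*} [Fintype ι] {M : Type*} [AddCommGroup M] [Module ℂ M]
    (t : ι → ι → M) (h : ∀ j k, t j k = - t k j) :
    ∑ j, ∑ k, t j k = 0 := by
  have hD : (∑ j, ∑ k, t j k) = - ∑ j, ∑ k, t j k := by
    calc ∑ j, ∑ k, t j k = ∑ j, ∑ k, -(t k j) :=
          Finset.sum_congr rfl fun j _ => Finset.sum_congr rfl fun k _ => h j k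
      _ = - ∑ j, ∑ k, t k j := by simp [Finset.sum_neg_distrib]
      _ = - ∑ k, ∑ j, t k j := by rw [Finset.sum_comm]
  have h2 : (2 : ℂ) • (∑ j, ∑ k, t j k) = 0 := by
    rw [two_smul]
    nth_rewrite 2 [hD]
    simp
  have := smul_eq_zero.mp h2
  simpa using this
end Key

section KeyLemma
variable {m s : ℕ}

lemma key (lam : Fin s → ℂ) (f : Fin s → MvPolynomial (Fin m) ℂ) (i : Fin s) (a b : Fin m) :
    lam i • (Fi f i * (pderiv a (∑ j, lam j • (Fi f j * pderiv b (f j)))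
                     - pderiv b (∑ j, lam j • (Fi f j * pderiv a (f j)))))
    = (∑ j, lam j • (Fi f j * pderiv a (f j)))
        * (∑ k ∈ Finset.univ.erase i, (lam k - lam i) • (Fji f k i * pderiv b (f k)))
    - (∑ j, lam j • (Fi f j * pderiv b (f j)))
        * (∑ k ∈ Finset.univ.erase i, (lam k - lam i) • (Fji f k i * pderiv a (f k))) := by
  classical
  simp only [smul_eq_C_mul]
  set A : Fin s → Fin s → MvPolynomial (Fin m) ℂ :=
    fun k j => pderiv a (f k) * pderiv b (f j) - pderiv b (f k) * pderiv a (f j) with hA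
  have expand : ∀ x y : Fin m,
      pderiv x (∑ j, C (lam j) * (Fi f j * pderiv y (f j)))
      = (∑ j, C (lam j) *
            ((∑ k ∈ Finset.univ.erase j, Fji f j k * pderiv x (f k)) * pderiv y (f j)))
        + ∑ j, C (lam j) * (Fi f j * pderiv x (pderiv y (f j))) := by
    intro x y
    rw [map_sum, ← Finset.sum_add_distrib]
    refine Finset.sum_congr rfl fun j _ => ?_
    rw [pderiv_C_mul, pderiv_mul, pderiv_Fi, mul_add]
  rw [expand a b, expand b a]
  have cancel : (∑ j, C (lam j) * (Fi f j * pderiv a (pderiv b (f j))))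
      = ∑ j, C (lam j) * (Fi f j * pderiv b (pderiv a (f j))) :=
    Finset.sum_congr rfl fun j _ => by rw [pderiv_comm' a b]
  rw [cancel, add_sub_add_right_eq_sub]
  -- canonical form of the left-hand side
  have diagL : ∀ j : Fin s,
      C (lam i * lam j) * (Fi f i * (Fji f j j * A j j)) = 0 := by
    intro j
    simp only [hA]
    ring_nf
  have hL : C (lam i) * (Fi f i *
        ((∑ j, C (lam j) *
            ((∑ k ∈ Finset.univ.erase j, Fji f j k * pderiv a (f k)) * pderiv b (f j)))
       - (∑ j, C (lam j) *
            ((∑ k ∈ Finset.univ.erase j, Fji f j k * pderiv b (f k)) * pderiv a (f j)))))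
      = ∑ j, ∑ k, C (lam i * lam j) * (Fi f i * (Fji f j k * A k j)) := by
    rw [← Finset.sum_sub_distrib, Finset.mul_sum, Finset.mul_sum]
    refine Finset.sum_congr rfl fun j _ => ?_
    rw [← Finset.sum_erase (f := fun k => C (lam i * lam j) * (Fi f i * (Fji f j k * A k j))) Finset.univ (diagL j)]
    simp only [Finset.sum_mul, Finset.mul_sum, ← Finset.sum_sub_distrib]
    refine Finset.sum_congr rfl fun k _ => ?_
    simp only [hA, map_mul]
    ring
  have diagR : ∀ j : Fin s,
      C (lam j * (lam i - lam i)) * (Fi f j * (Fji f i i * A j i)) = 0 := by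
    intro j
    simp
  have hR : (∑ j, C (lam j) * (Fi f j * pderiv a (f j)))
        * (∑ k ∈ Finset.univ.erase i, C (lam k - lam i) * (Fji f k i * pderiv b (f k)))
      - (∑ j, C (lam j) * (Fi f j * pderiv b (f j)))
        * (∑ k ∈ Finset.univ.erase i, C (lam k - lam i) * (Fji f k i * pderiv a (f k)))
      = ∑ j, ∑ k, C (lam j * (lam k - lam i)) * (Fi f j * (Fji f k i * A j k)) := by
    rw [Finset.sum_mul_sum, Finset.sum_mul_sum, ← Finset.sum_sub_distrib]
    refine Finset.sum_congr rfl fun j _ => ?_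
    rw [← Finset.sum_sub_distrib,
      ← Finset.sum_erase (f := fun k => C (lam j * (lam k - lam i))
          * (Fi f j * (Fji f k i * A j k))) Finset.univ (diagR j)]
    refine Finset.sum_congr rfl fun k _ => ?_
    simp only [hA, map_mul, map_sub]
    ring
  rw [hL, hR, ← sub_eq_zero]
  simp only [← Finset.sum_sub_distrib]
  refine sq_antisym _ fun j k => ?_
  rcases eq_or_ne j k with rfl | hjk
  · simp only [hA, map_mul, map_sub]; ring
  rcases eq_or_ne i j with rfl | hij
  · simp only [hA, map_mul, map_sub, Fji_symm f i k]; ring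
  rcases eq_or_ne i k with rfl | hik
  · simp only [hA, map_mul, map_sub, Fji_symm f i j]; ring
  · have h1 : Fi f j * Fji f k i = Fi f i * Fji f j k := triple_prod f hik hij hjk.symm
    have h2 : Fi f k * Fji f j i = Fi f i * Fji f k j := triple_prod f hij hik hjk
    have h3 : Fji f j k = Fji f k j := Fji_symm f j k
    simp only [hA, map_mul, map_sub]
    linear_combination
      (-(C (lam j) * (C (lam k) - C (lam i)) *
          (pderiv a (f j) * pderiv b (f k) - pderiv b (f j) * pderiv a (f k)))) * h1 +
      (-(C (lam k) * (C (lam j) - C (lam i)) *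
          (pderiv a (f k) * pderiv b (f j) - pderiv b (f k) * pderiv a (f j)))) * h2 +
      (Fi f i * (C (lam i) * C (lam j) *
          (pderiv a (f k) * pderiv b (f j) - pderiv b (f k) * pderiv a (f j))
        - C (lam j) * (C (lam k) - C (lam i)) *
          (pderiv a (f j) * pderiv b (f k) - pderiv b (f j) * pderiv a (f k)))) * h3
end KeyLemma

section Main
variable {m s : ℕ}

lemma omegaL_apply (lam : Fin s → ℂ) (f : Fin s → MvPolynomial (Fin m) ℂ)
    (g : Fin 1 → Fin m) :
    omegaL lam f g = ∑ j, lam j • (Fi f j * pderiv (g 0) (f j)) := by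
  unfold omegaL
  rw [Finset.sum_apply]
  refine Finset.sum_congr rfl fun j _ => ?_
  rw [Pi.smul_apply, wedge01, extd_const]

theorem logarithmic_generators_in_ideal'
    (lam : Fin s → ℂ) (deg : Fin s → ℕ) (f : Fin s → MvPolynomial (Fin m) ℂ)
    (hdeg : ∀ i, 0 < deg i) (hf : ∀ i, (f i).IsHomogeneous (deg i))
    (hlam0 : ∀ i, lam i ≠ 0)
    (hres : ∑ i, lam i * (deg i : ℂ) = 0) :
    ∀ i : Fin s,
      (∃ θ : Form m 1,
        wedge (const (Fi f i)) (extd (omegaL lam f)) = wedge (omegaL lam f) θ) ∧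
      ((((∑ j, deg j) - deg i : ℕ) : ℂ) •
          wedge (const (Fi f i)) (extd (omegaL lam f)) =
        ((∑ j, deg j : ℕ) : ℂ) • wedge (omegaL lam f)
          (((((∑ j, deg j) - deg i : ℕ) : ℂ) / (((∑ j, deg j : ℕ) : ℂ) * lam i)) •
              (∑ j ∈ Finset.univ.erase i,
                (lam j - lam i) • wedge (const (Fji f j i)) (extd (const (f j)))) +
            extd (const (Fi f i)) - extd (const (Fi f i)))) := by
  intro i
  have hs0 : 0 < s := i.pos
  have he : deg i ≤ ∑ j, deg j := Finset.single_le_sum (fun _ _ => Nat.zero_le _) (Finset.mem_univ i)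
  have he0 : ((∑ j, deg j : ℕ) : ℂ) ≠ 0 := by
    have : 0 < ∑ j, deg j := lt_of_lt_of_le (hdeg i) he
    exact_mod_cast this.ne'
  set Tf : Form m 1 := ∑ j ∈ Finset.univ.erase i,
      (lam j - lam i) • wedge (const (Fji f j i)) (extd (const (f j))) with hTfdef
  have hTf : ∀ g : Fin 1 → Fin m,
      Tf g = ∑ k ∈ Finset.univ.erase i, (lam k - lam i) • (Fji f k i * pderiv (g 0) (f k)) := by
    intro g
    rw [hTfdef, Finset.sum_apply]
    refine Finset.sum_congr rfl fun k _ => ?_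
    rw [Pi.smul_apply, wedge01, extd_const]
  have hmain : ∀ g : Fin 2 → Fin m,
      lam i • (wedge (const (Fi f i)) (extd (omegaL lam f)) g)
      = omegaL lam f (fun _ => g 0) * Tf (fun _ => g 1)
        - omegaL lam f (fun _ => g 1) * Tf (fun _ => g 0) := by
    intro g
    rw [wedge0extd, extd1, hTf, hTf, omegaL_apply, omegaL_apply]
    exact key lam f i (g 0) (g 1)
  constructor
  · refine ⟨(lam i)⁻¹ • Tf, ?_⟩
    funext g
    rw [wedge11_s13, Pi.smul_apply, Pi.smul_apply, mul_smul_comm, mul_smul_comm, ← smul_sub,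
      ← hmain g, inv_smul_smul₀ (hlam0 i)]
  · rw [add_sub_cancel_right]
    funext g
    rw [Pi.smul_apply, Pi.smul_apply, wedge11_s13, Pi.smul_apply, Pi.smul_apply,
      mul_smul_comm, mul_smul_comm, ← smul_sub, ← hmain g, smul_smul, smul_smul]
    congr 1
    have he0' : (∑ x, ((deg x : ℕ) : ℂ)) ≠ 0 := by push_cast at he0; exact he0
    rw [Nat.cast_sub he]
    push_cast
    field_simp [he0', hlam0 i]
end Main

end AuxProof

/-- for the logarithmic form `ω_L = Σ λᵢFᵢdfᵢ`, each `Fᵢ` lies in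
`I(ω_L)`; explicitly, with `e = Σdᵢ`, `bᵢ = e − dᵢ` and
`θᵢ = (bᵢ/(eλᵢ))·Σ_{j≠i}(λⱼ−λᵢ)F_{ji}dfⱼ + dFᵢ`, one has
`bᵢ·Fᵢ·dω_L = e·ω_L ∧ (θᵢ − dFᵢ)`. -/
theorem logarithmic_generators_in_ideal {m s : ℕ}
    (lam : Fin s → ℂ) (deg : Fin s → ℕ) (f : Fin s → MvPolynomial (Fin m) ℂ)
    (hdeg : ∀ i, 0 < deg i) (hf : ∀ i, (f i).IsHomogeneous (deg i))
    (hlam0 : ∀ i, lam i ≠ 0)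
    (hres : ∑ i, lam i * (deg i : ℂ) = 0) :
    ∀ i : Fin s,
      (∃ θ : Form m 1,
        wedge (const (Fi f i)) (extd (omegaL lam f)) = wedge (omegaL lam f) θ) ∧
      ((((∑ j, deg j) - deg i : ℕ) : ℂ) •
          wedge (const (Fi f i)) (extd (omegaL lam f)) =
        ((∑ j, deg j : ℕ) : ℂ) • wedge (omegaL lam f)
          (((((∑ j, deg j) - deg i : ℕ) : ℂ) / (((∑ j, deg j : ℕ) : ℂ) * lam i)) •
              (∑ j ∈ Finset.univ.erase i,
                (lam j - lam i) • wedge (const (Fji f j i)) (extd (const (f j)))) +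
            extd (const (Fi f i)) - extd (const (Fi f i)))) :=
  logarithmic_generators_in_ideal' lam deg f hdeg hf hlam0 hres
end

section
/- Let ω be an integrable (ω∧dω = 0) homogeneous 1-form of degree e on ℂ^{n+1}, nonzero. Then dω is a 2-cycle in the Koszul complex of ω (i.e. ω∧dω = 0) but dω is not a Koszul boundary: there is no 1-form θ with dω = ω∧θ unless dω = 0; hence if dω ≠ 0 the second Koszul homology H²(K•(ω)) is nonzero. -/
open MvPolynomial Finset

section Aux
open MvPolynomial Finset

private lemma Xpd_aux {m : ℕ} (s : Fin m →₀ ℕ) (c : ℂ) (j : Fin m) :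
    X j * pderiv j (monomial s c) = (s j) • monomial s c := by
  rw [pderiv_monomial]
  by_cases h : s j = 0
  · simp [h]
  · have hs : Finsupp.single j 1 + (s - Finsupp.single j 1) = s := by
      ext k
      by_cases hk : k = j <;>
        simp [hk, Finsupp.single_apply, Nat.one_le_iff_ne_zero.mpr h]
    rw [X, monomial_mul, one_mul, hs, smul_monomial]
    congr 1
    rw [nsmul_eq_mul]; ring

private lemma euler_aux {m d : ℕ} (p : MvPolynomial (Fin m) ℂ) (hp : p.IsHomogeneous d) :
    ∑ j : Fin m, X j * pderiv j p = d • p := by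
  conv_lhs => rw [← p.support_sum_monomial_coeff]
  conv_rhs => rw [← p.support_sum_monomial_coeff, Finset.smul_sum]
  simp_rw [map_sum, Finset.mul_sum]
  rw [Finset.sum_comm]
  refine Finset.sum_congr rfl fun s hs => ?_
  simp_rw [Xpd_aux]
  rw [← Finset.sum_smul]
  congr 1
  have hc := hp (mem_support_iff.mp hs)
  rw [← hc, Finsupp.weight_apply, Finsupp.sum_fintype]
  · simp
  · intro _; rfl

private lemma extd1_apply_aux {m : ℕ} (ω : Form m 1) (f : Fin 2 → Fin m) :
    extd ω f = pderiv (f 0) (ω fun _ => f 1) - pderiv (f 1) (ω fun _ => f 0) := by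
  rw [extd, Fin.sum_univ_two]
  have h0 : (f ∘ (0 : Fin 2).succAbove) = fun _ => f 1 := by
    funext i; rw [Subsingleton.elim i 0]; rfl
  have h1 : (f ∘ (1 : Fin 2).succAbove) = fun _ => f 0 := by
    funext i; rw [Subsingleton.elim i 0]; rfl
  rw [h0, h1]
  simp [sub_eq_add_neg]

private lemma wedge11_apply_aux {m : ℕ} (ω θ : Form m 1) (f : Fin 2 → Fin m) :
    wedge ω θ f = ω (fun _ => f 0) * θ (fun _ => f 1) - ω (fun _ => f 1) * θ (fun _ => f 0) := by
  rw [wedge]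
  rw [show (Finset.univ : Finset (Equiv.Perm (Fin 2))) = {Equiv.refl _, Equiv.swap 0 1}
    from by decide]
  rw [Finset.sum_insert (by decide), Finset.sum_singleton]
  have e1 : ∀ (π : Equiv.Perm (Fin 2)),
      (fun i : Fin 1 => f (π (Fin.castAdd 1 i))) = (fun _ => f (π 0)) := by
    intro π; funext i; rw [Subsingleton.elim i 0]; rfl
  have e2 : ∀ (π : Equiv.Perm (Fin 2)),
      (fun j : Fin 1 => f (π (Fin.natAdd 1 j))) = (fun _ => f (π 1)) := by
    intro π; funext j; rw [Subsingleton.elim j 0]; rfl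
  rw [e1, e2, e1, e2]
  simp [sub_eq_add_neg, Equiv.swap_apply_left, Equiv.swap_apply_right]

private lemma no_theta_aux {m e : ℕ} (he : 1 ≤ e)
    (ω : Form m 1) (hω : IsHomog 1 e ω) (hR : ctr ω = 0) (hne : ω ≠ 0)
    (θ : Form m 1) (hθ : extd ω = wedge ω θ) : False := by
  obtain ⟨g, hg⟩ := Function.ne_iff.mp hne
  set b := g 0 with hb
  have hgb : g = fun _ => b := funext fun i => by rw [Subsingleton.elim i 0]
  have hR0 : ∑ j : Fin m, X j * ω (fun _ => j) = 0 := by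
    have h := congrFun hR (Fin.elim0)
    rw [ctr] at h
    have hc : ∀ j : Fin m, (Fin.cons j Fin.elim0 : Fin 1 → Fin m) = fun _ => j := by
      intro j; funext i; fin_cases i; rfl
    simp_rw [hc] at h
    simpa using h
  have hcons0 : ∀ j : Fin m, (Fin.cons j g : Fin 2 → Fin m) 0 = j := fun j => rfl
  have hcons1 : ∀ j : Fin m, (Fin.cons j g : Fin 2 → Fin m) 1 = b := fun j => rfl
  have key : ∑ j : Fin m, X j * extd ω (Fin.cons j g)
      = ∑ j : Fin m, X j * wedge ω θ (Fin.cons j g) := by rw [hθ]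
  set p : MvPolynomial (Fin m) ℂ := ∑ j : Fin m, X j * θ (fun _ => j) with hp
  -- LHS: Euler identity gives e • ω_b
  have hL : ∑ j : Fin m, X j * extd ω (Fin.cons j g)
      = (e : MvPolynomial (Fin m) ℂ) * ω (fun _ => b) := by
    have hexp : ∀ j : Fin m, extd ω (Fin.cons j g)
        = pderiv j (ω fun _ => b) - pderiv b (ω fun _ => j) := by
      intro j
      rw [extd1_apply_aux ω (Fin.cons j g), hcons0, hcons1]
    simp_rw [hexp, mul_sub]
    rw [Finset.sum_sub_distrib]
    have hE : ∑ j : Fin m, X j * pderiv j (ω fun _ => b) = (e - 1) • ω (fun _ => b) :=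
      euler_aux _ (hω _)
    have hS2 : ∑ j : Fin m, X j * pderiv b (ω fun _ => j) = - ω (fun _ => b) := by
      have h0 : (pderiv b) (∑ j : Fin m, X j * ω (fun _ => j)) = 0 := by
        rw [hR0, map_zero]
      rw [map_sum] at h0
      simp_rw [pderiv_mul] at h0
      rw [Finset.sum_add_distrib] at h0
      have h1 : ∑ j : Fin m, pderiv b (X j) * ω (fun _ => j) = ω (fun _ => b) := by
        rw [Finset.sum_eq_single b]
        · rw [pderiv_X_self, one_mul]
        · intro c _ hc; rw [pderiv_X_of_ne hc, zero_mul]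
        · intro hb'; exact absurd (Finset.mem_univ b) hb'
      rw [h1] at h0
      exact eq_neg_of_add_eq_zero_right h0
    rw [hE, hS2, sub_neg_eq_add, nsmul_eq_mul, Nat.cast_sub he]
    push_cast
    ring
  -- RHS: equals - ω_b * p
  have hW : ∑ j : Fin m, X j * wedge ω θ (Fin.cons j g)
      = - (ω (fun _ => b) * p) := by
    have hexp : ∀ j : Fin m, wedge ω θ (Fin.cons j g)
        = ω (fun _ => j) * θ (fun _ => b) - ω (fun _ => b) * θ (fun _ => j) := by
      intro j
      rw [wedge11_apply_aux ω θ (Fin.cons j g), hcons0, hcons1]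
    simp_rw [hexp, mul_sub]
    rw [Finset.sum_sub_distrib]
    have h1 : ∑ j : Fin m, X j * (ω (fun _ => j) * θ (fun _ => b)) = 0 := by
      simp_rw [← mul_assoc]
      rw [← Finset.sum_mul, hR0, zero_mul]
    have h2 : ∑ j : Fin m, X j * (ω (fun _ => b) * θ (fun _ => j))
        = ω (fun _ => b) * p := by
      rw [hp, Finset.mul_sum]
      exact Finset.sum_congr rfl fun j _ => by ring
    rw [h1, h2, zero_sub]
  rw [hL, hW] at key
  have hzero : ω (fun _ => b) * ((e : MvPolynomial (Fin m) ℂ) + p) = 0 := by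
    linear_combination key
  rw [hgb] at hg
  have hpe : (e : MvPolynomial (Fin m) ℂ) + p = 0 := (mul_eq_zero.mp hzero).resolve_left hg
  have hcc := congrArg (constantCoeff) hpe
  rw [map_add, map_natCast, map_zero, hp, map_sum] at hcc
  simp only [map_mul, constantCoeff_X, zero_mul, Finset.sum_const_zero, add_zero] at hcc
  have : (e : ℂ) ≠ 0 := Nat.cast_ne_zero.mpr (by omega)
  exact this hcc
end Aux

/-- for a nonzero integrable homogeneous 1-form `ω`, `dω` is a
2-cycle of the Koszul complex of `ω`, but `dω = ω∧θ` forces `dω = 0`; hence if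
`dω ≠ 0` then `dω` is not a Koszul boundary (so `H²(K•(ω)) ≠ 0`). -/
theorem dω_not_koszul_boundary {m e : ℕ} (he : 1 ≤ e)
    (ω : Form m 1) (hω : IsHomog 1 e ω) (hR : ctr ω = 0)
    (hint : wedge ω (extd ω) = 0) (hne : ω ≠ 0) :
    wedge ω (extd ω) = 0 ∧
    (∀ θ : Form m 1, extd ω = wedge ω θ → extd ω = 0) ∧
    (extd ω ≠ 0 → ¬∃ θ : Form m 1, extd ω = wedge ω θ) := by
  refine ⟨hint, ?_, ?_⟩
  · intro θ hθ
    exact absurd (no_theta_aux he ω hω hR hne θ hθ) not_false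
  · rintro hd ⟨θ, hθ⟩
    exact no_theta_aux he ω hω hR hne θ hθ
end
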